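/- Let E ⊆ X × Y be measurable in a graded probability space, with E μ-stable (d-μ-stable for some d). Then there exists a partition of X into countably many measurable sets, each of which is perfect for E. -/

import Mathlib

open Set MeasureTheory
open scoped ENNReal

/-- The index set `2^{<d}` of 0-1 sequences of length `< d`. -/
abbrev TreeIdx (d : ℕ) := (i : Fin d) × (Fin i.val → Bool)

/-- The set `E^σ_{(b_{σ|_0}, …, b_{σ|_{i-1}})}` along the branch `σ ∈ 2^i`. -/
def branchSet {X Y : Type*} (E : Set (X × Y)) {d : ℕ} (b : TreeIdx d → Y)
    (i : Fin d) (σ : Fin i.val → Bool) : Set X :=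
  {x | ∀ j : Fin i.val,
    ((x, b ⟨⟨j.1, j.2.trans i.2⟩, fun k => σ ⟨k.1, k.2.trans j.2⟩⟩) ∈ E ↔ σ j = true)}

/-- The set of μ-trees of height `d` for `E`. -/
def muTreeSet {X Y : Type*} [MeasurableSpace X] (μX : Measure X)
    (E : Set (X × Y)) (d : ℕ) : Set (TreeIdx d → Y) :=
  {b | ∀ (i : Fin d) (σ : Fin i.val → Bool),
    0 < μX (branchSet E b i σ ∩ {x | (x, b ⟨i, σ⟩) ∈ E}) ∧
    0 < μX (branchSet E b i σ \ {x | (x, b ⟨i, σ⟩) ∈ E})}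

/-- `A` is perfect for `E`: the set of `y` whose fiber μ-splits `A` has measure zero. -/
def PerfectFor {X Y : Type*} [MeasurableSpace X] [MeasurableSpace Y]
    (μX : Measure X) (μY : Measure Y) (E : Set (X × Y)) (A : Set X) : Prop :=
  μY {y | 0 < μX (A ∩ {x | (x, y) ∈ E}) ∧ 0 < μX (A \ {x | (x, y) ∈ E})} = 0

theorem pi_iInter_pos {ι : Type*} [Fintype ι] [DecidableEq ι] {Y : Type*} [MeasurableSpace Y]
    (ν : Measure Y) [IsProbabilityMeasure ν] [Nonempty Y]
    (ρ : ι → ℕ) (F : ι → Set (ι → Y))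
    (hFm : ∀ i, MeasurableSet (F i))
    (hdep : ∀ i, ∀ b c : ι → Y, (∀ j, ρ j < ρ i → b j = c j) → b i = c i →
      (b ∈ F i ↔ c ∈ F i))
    (hpos : ∀ i, ∀ b : ι → Y, (∀ j, ρ j < ρ i → b ∈ F j) →
      0 < ν {y | Function.update b i y ∈ F i}) :
    0 < Measure.pi (fun _ : ι => ν) (⋂ i, F i) := by
  classical
  obtain ⟨y₀⟩ := ‹Nonempty Y›
  set π := Measure.pi (fun _ : ι => ν) with hπdef
  set S : ℕ → Set (ι → Y) := fun k => ⋂ i, ⋂ (_ : ρ i < k), F i with hSdef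
  have hSm : ∀ k, MeasurableSet (S k) :=
    fun k => MeasurableSet.iInter fun i => MeasurableSet.iInter fun _ => hFm i
  have key : ∀ k, 0 < π (S k) := by
    intro k
    induction k with
    | zero =>
      have : S 0 = univ := by simp [hSdef]
      rw [this]; simp
    | succ k ih =>
      set p : ι → Prop := fun i => ρ i = k with hp
      set e := MeasurableEquiv.piEquivPiSubtypeProd (fun _ : ι => Y) p with he
      have hmp := measurePreserving_piEquivPiSubtypeProd (fun _ : ι => ν) p
      set πp := Measure.pi (fun _ : Subtype p => ν) with hπp
      set πr := Measure.pi (fun _ : {i // ¬ p i} => ν) with hπr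
      have happN : ∀ (c : Subtype p → Y) (r : {i // ¬ p i} → Y) (j : ι) (h : ¬ p j),
          e.symm (c, r) j = r ⟨j, h⟩ := by
        intro c r j h
        show (if h' : p j then c ⟨j, h'⟩ else r ⟨j, h'⟩) = r ⟨j, h⟩
        rw [dif_neg h]
      have happP : ∀ (c : Subtype p → Y) (r : {i // ¬ p i} → Y) (j : ι) (h : p j),
          e.symm (c, r) j = c ⟨j, h⟩ := by
        intro c r j h
        show (if h' : p j then c ⟨j, h'⟩ else r ⟨j, h'⟩) = c ⟨j, h⟩
        rw [dif_pos h]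
      have hπeq : ∀ (T : Set (ι → Y)), MeasurableSet T →
          π T = (πp.prod πr) (⇑e.symm ⁻¹' T) := by
        intro T hT
        rw [← hmp.map_eq, Measure.map_apply e.measurable (e.symm.measurableSet_preimage.2 hT)]
        congr 1
        ext b
        simp
      -- membership in S k only depends on the r-part
      have hSk_mem : ∀ (c c' : Subtype p → Y) (r : {i // ¬ p i} → Y),
          e.symm (c, r) ∈ S k → e.symm (c', r) ∈ S k := by
        intro c c' r hmem
        simp only [hSdef, mem_iInter] at hmem ⊢
        intro i hi
        refine (hdep i _ _ (fun j hj => ?_) ?_).1 (hmem i hi)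
        · have hj' : ¬ p j := by simp only [hp]; omega
          rw [happN c r j hj', happN c' r j hj']
        · have hi' : ¬ p i := by simp only [hp]; omega
          rw [happN c r i hi', happN c' r i hi']
      set G : Set ({i // ¬ p i} → Y) := {r | e.symm ((fun _ => y₀), r) ∈ S k} with hG
      have hGm : MeasurableSet G := by
        have : Measurable fun r : {i // ¬ p i} → Y => e.symm ((fun _ => y₀), r) :=
          e.symm.measurable.comp (measurable_const.prodMk measurable_id)
        exact this (hSm k)
      have hGpos : 0 < πr G := by
        have h1 : π (S k) = ∫⁻ r, πp ((fun c => (c, r)) ⁻¹' (⇑e.symm ⁻¹' S k)) ∂πr := by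
          rw [hπeq _ (hSm k), Measure.prod_apply_symm (e.symm.measurableSet_preimage.2 (hSm k))]
        have h2 : ∀ r, πp ((fun c => (c, r)) ⁻¹' (⇑e.symm ⁻¹' S k)) = G.indicator 1 r := by
          intro r
          by_cases hr : r ∈ G
          · have : ((fun c => (c, r)) ⁻¹' (⇑e.symm ⁻¹' S k)) = univ := by
              ext c; simp only [mem_preimage, mem_univ, iff_true]
              exact hSk_mem _ c r hr
            rw [this]; simp [hr]
          · have : ((fun c => (c, r)) ⁻¹' (⇑e.symm ⁻¹' S k)) = ∅ := by
              ext c; simp only [mem_preimage, mem_empty_iff_false, iff_false]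
              intro hmem
              exact hr (hSk_mem c _ r hmem)
            rw [this]; simp [hr]
        rw [h1] at ih
        calc (0:ℝ≥0∞) < ∫⁻ r, πp ((fun c => (c, r)) ⁻¹' (⇑e.symm ⁻¹' S k)) ∂πr := ih
        _ = ∫⁻ r, G.indicator 1 r ∂πr := by simp_rw [h2]
        _ = πr G := by rw [lintegral_indicator_one hGm]
      -- sections of S (k+1) over good r are products
      have hsec : ∀ r ∈ G, ((fun c => (c, r)) ⁻¹' (⇑e.symm ⁻¹' S (k+1)))
          = univ.pi (fun i : Subtype p =>
              {y | Function.update (e.symm ((fun _ => y₀), r)) i.1 y ∈ F i.1}) := by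
        intro r hr
        have hfr : ∀ (c : Subtype p → Y) (i : Subtype p),
            (e.symm (c, r) ∈ F i.1 ↔
              Function.update (e.symm ((fun _ => y₀), r)) i.1 (c i) ∈ F i.1) := by
          intro c i
          refine hdep i.1 _ _ (fun j hj => ?_) ?_
          · have hpi : p i.1 := i.2
            have hj' : ¬ p j := by simp only [hp] at *; omega
            have hji : j ≠ i.1 := by intro hh; rw [hh] at hj; omega
            rw [Function.update_of_ne hji, happN c r j hj', happN _ r j hj']
          · rw [Function.update_self, happP c r i.1 i.2]
        ext c
        simp only [mem_preimage, hSdef, mem_iInter, mem_pi, mem_univ, true_implies,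
          mem_setOf_eq]
        constructor
        · intro h i
          have hik : ρ i.1 < k + 1 := by have hpi : p i.1 := i.2; simp only [hp] at hpi; omega
          exact (hfr c i).1 (h i.1 hik)
        · intro h i hik
          rcases Nat.lt_succ_iff_lt_or_eq.1 hik with hik' | hik'
          · have hmem : e.symm ((fun _ => y₀), r) ∈ S k := hr
            simp only [hSdef, mem_iInter] at hmem
            have := hmem i hik'
            refine (hdep i _ _ (fun j hj => ?_) ?_).2 this
            · have hj' : ¬ p j := by simp only [hp]; omega
              rw [happN c r j hj', happN _ r j hj']
            · have hi' : ¬ p i := by simp only [hp]; omega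
              rw [happN c r i hi', happN _ r i hi']
          · have hpi : p i := hik'
            exact (hfr c ⟨i, hpi⟩).2 (h ⟨i, hpi⟩)
      have hsecpos : ∀ r ∈ G, 0 < πp (univ.pi (fun i : Subtype p =>
          {y | Function.update (e.symm ((fun _ => y₀), r)) i.1 y ∈ F i.1})) := by
        intro r hr
        rw [hπp, Measure.pi_pi]
        rw [CanonicallyOrderedAdd.prod_pos]
        intro i _
        refine hpos i.1 (e.symm ((fun _ => y₀), r)) fun j hj => ?_
        have hmem : e.symm ((fun _ => y₀), r) ∈ S k := hr
        simp only [hSdef, mem_iInter] at hmem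
        refine hmem j ?_
        have hpi : p i.1 := i.2
        simp only [hp] at hpi
        omega
      -- conclude
      rw [pos_iff_ne_zero]
      intro hzero
      have h1 : π (S (k+1)) = ∫⁻ r, πp ((fun c => (c, r)) ⁻¹' (⇑e.symm ⁻¹' S (k+1))) ∂πr := by
        rw [hπeq _ (hSm (k+1)),
          Measure.prod_apply_symm (e.symm.measurableSet_preimage.2 (hSm (k+1)))]
      have hfm : Measurable fun r => πp ((fun c => (c, r)) ⁻¹' (⇑e.symm ⁻¹' S (k+1))) :=
        measurable_measure_prodMk_right (e.symm.measurableSet_preimage.2 (hSm (k+1)))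
      rw [h1, lintegral_eq_zero_iff hfm] at hzero
      have hnull : πr {r | ¬ πp ((fun c => (c, r)) ⁻¹' (⇑e.symm ⁻¹' S (k+1))) = (0:ℝ≥0∞)} = 0 := by
        have := hzero
        rw [Filter.EventuallyEq, ae_iff] at this
        simpa using this
      have : πr G = 0 := by
        refine measure_mono_null (fun r hr => ?_) hnull
        simp only [mem_setOf_eq]
        rw [hsec r hr]
        exact (hsecpos r hr).ne'
      exact hGpos.ne' this
  have hfin : (⋂ i, F i) = S ((Finset.univ.sup ρ) + 1) := by
    simp only [hSdef]
    ext b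
    simp only [mem_iInter]
    refine forall_congr' fun i => ?_
    have : ρ i < Finset.univ.sup ρ + 1 :=
      Nat.lt_succ_of_le (Finset.le_sup (Finset.mem_univ i))
    simp [this]
  rw [hfin]
  exact key _

theorem exists_perfect_subset
    {X Y : Type*} [MeasurableSpace X] [MeasurableSpace Y]
    (μX : Measure X) (μY : Measure Y)
    [IsProbabilityMeasure μX] [IsProbabilityMeasure μY]
    (E : Set (X × Y)) (hE : MeasurableSet E)
    (hstab : ∃ d : ℕ, 1 ≤ d ∧
      (Measure.pi fun _ : TreeIdx d => μY) (muTreeSet μX E d) = 0)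
    (A : Set X) (hA : MeasurableSet A) (hApos : 0 < μX A) :
    ∃ P, MeasurableSet P ∧ P ⊆ A ∧ 0 < μX P ∧ PerfectFor μX μY E P := by
  classical
  by_contra hcon
  push_neg at hcon
  obtain ⟨d, hd, htree⟩ := hstab
  have hYne : Nonempty Y := by
    by_contra hne
    rw [not_nonempty_iff] at hne
    have h1 : (univ : Set Y) = ∅ := univ_eq_empty_iff.2 hne
    have h2 := measure_univ (μ := μY)
    rw [h1] at h2
    simp at h2
  set F : TreeIdx d → Set (TreeIdx d → Y) := fun idx =>
    {b | 0 < μX (A ∩ branchSet E b idx.1 idx.2 ∩ {x | (x, b idx) ∈ E}) ∧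
      0 < μX ((A ∩ branchSet E b idx.1 idx.2) \ {x | (x, b idx) ∈ E})} with hF
  set ρ : TreeIdx d → ℕ := fun idx => idx.1.val with hρ
  have hbranch_dep : ∀ (b c : TreeIdx d → Y) (i : Fin d) (σ : Fin i.val → Bool),
      (∀ j : TreeIdx d, j.1.val < i.val → b j = c j) →
      branchSet E b i σ = branchSet E c i σ := by
    intro b c i σ h
    unfold branchSet
    ext x
    simp only [mem_setOf_eq]
    refine forall_congr' fun j => ?_
    rw [h ⟨⟨j.1, j.2.trans i.2⟩, fun k => σ ⟨k.1, k.2.trans j.2⟩⟩ j.2]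
  have hbranch_meas : ∀ (b : TreeIdx d → Y) (i : Fin d) (σ : Fin i.val → Bool),
      MeasurableSet (branchSet E b i σ) := by
    intro b i σ
    have hBT : branchSet E b i σ
        = ⋂ j : Fin i.val, {x |
          ((x, b ⟨⟨j.1, j.2.trans i.2⟩, fun k => σ ⟨k.1, k.2.trans j.2⟩⟩) ∈ E ↔ σ j = true)} := by
      ext x; simp only [branchSet, mem_setOf_eq, mem_iInter]
    rw [hBT]
    refine MeasurableSet.iInter fun j => ?_
    set y := b ⟨⟨j.1, j.2.trans i.2⟩, fun k => σ ⟨k.1, k.2.trans j.2⟩⟩ with hy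
    have hpre : MeasurableSet {x | (x, y) ∈ E} := (measurable_prodMk_right (y := y)) hE
    by_cases hσ : σ j = true
    · have : {x : X | ((x, y) ∈ E ↔ σ j = true)} = {x | (x, y) ∈ E} := by
        ext x; simp [hσ]
      rw [this]; exact hpre
    · have : {x : X | ((x, y) ∈ E ↔ σ j = true)} = {x | (x, y) ∈ E}ᶜ := by
        ext x; simp [hσ]
      rw [this]; exact hpre.compl
  have hFm : ∀ idx, MeasurableSet (F idx) := by
    rintro ⟨i, σ⟩
    have hbm : MeasurableSet {q : (TreeIdx d → Y) × X | q.2 ∈ A ∧ q.2 ∈ branchSet E q.1 i σ} := by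
      have hBT : {q : (TreeIdx d → Y) × X | q.2 ∈ A ∧ q.2 ∈ branchSet E q.1 i σ}
          = (Prod.snd ⁻¹' A) ∩ ⋂ j : Fin i.val, {q : (TreeIdx d → Y) × X |
            ((q.2, q.1 ⟨⟨j.1, j.2.trans i.2⟩, fun k => σ ⟨k.1, k.2.trans j.2⟩⟩) ∈ E ↔
              σ j = true)} := by
        ext q
        simp only [mem_setOf_eq, mem_inter_iff, mem_preimage, mem_iInter, branchSet]
      rw [hBT]
      refine (measurable_snd hA).inter (MeasurableSet.iInter fun j => ?_)
      have hq : Measurable fun q : (TreeIdx d → Y) × X =>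
          (q.2, q.1 ⟨⟨j.1, j.2.trans i.2⟩, fun k => σ ⟨k.1, k.2.trans j.2⟩⟩) :=
        measurable_snd.prodMk ((measurable_pi_apply _).comp measurable_fst)
      by_cases hσ : σ j = true
      · have h2 : {q : (TreeIdx d → Y) × X |
            ((q.2, q.1 ⟨⟨j.1, j.2.trans i.2⟩, fun k => σ ⟨k.1, k.2.trans j.2⟩⟩) ∈ E ↔
              σ j = true)} = (fun q : (TreeIdx d → Y) × X =>
            (q.2, q.1 ⟨⟨j.1, j.2.trans i.2⟩, fun k => σ ⟨k.1, k.2.trans j.2⟩⟩)) ⁻¹' E := by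
          ext q; simp [hσ]
        rw [h2]; exact hq hE
      · have h2 : {q : (TreeIdx d → Y) × X |
            ((q.2, q.1 ⟨⟨j.1, j.2.trans i.2⟩, fun k => σ ⟨k.1, k.2.trans j.2⟩⟩) ∈ E ↔
              σ j = true)} = ((fun q : (TreeIdx d → Y) × X =>
            (q.2, q.1 ⟨⟨j.1, j.2.trans i.2⟩, fun k => σ ⟨k.1, k.2.trans j.2⟩⟩)) ⁻¹' E)ᶜ := by
          ext q; simp [hσ]
        rw [h2]; exact (hq hE).compl
    have hEm : MeasurableSet {q : (TreeIdx d → Y) × X | (q.2, q.1 ⟨i, σ⟩) ∈ E} :=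
      (measurable_snd.prodMk ((measurable_pi_apply _).comp measurable_fst)) hE
    have hf1 : Measurable fun b : TreeIdx d → Y =>
        μX (A ∩ branchSet E b i σ ∩ {x | (x, b ⟨i, σ⟩) ∈ E}) := by
      have key1 : (fun b : TreeIdx d → Y => μX (A ∩ branchSet E b i σ ∩ {x | (x, b ⟨i, σ⟩) ∈ E}))
          = fun b : TreeIdx d → Y => μX (Prod.mk b ⁻¹' {q : (TreeIdx d → Y) × X |
              (q.2 ∈ A ∧ q.2 ∈ branchSet E q.1 i σ) ∧ (q.2, q.1 ⟨i, σ⟩) ∈ E}) := by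
        funext b; congr 1
      rw [key1]
      exact measurable_measure_prodMk_left
        (hbm.inter hEm)
    have hf2 : Measurable fun b : TreeIdx d → Y =>
        μX ((A ∩ branchSet E b i σ) \ {x | (x, b ⟨i, σ⟩) ∈ E}) := by
      have key2 : (fun b : TreeIdx d → Y =>
            μX ((A ∩ branchSet E b i σ) \ {x | (x, b ⟨i, σ⟩) ∈ E}))
          = fun b : TreeIdx d → Y => μX (Prod.mk b ⁻¹' {q : (TreeIdx d → Y) × X |
              (q.2 ∈ A ∧ q.2 ∈ branchSet E q.1 i σ) ∧ ¬ (q.2, q.1 ⟨i, σ⟩) ∈ E}) := by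
        funext b; congr 1
      rw [key2]
      exact measurable_measure_prodMk_left (hbm.inter hEm.compl)
    have hFeq : F ⟨i, σ⟩ = (fun b : TreeIdx d → Y =>
          μX (A ∩ branchSet E b i σ ∩ {x | (x, b ⟨i, σ⟩) ∈ E})) ⁻¹' Ioi 0
        ∩ (fun b : TreeIdx d → Y =>
          μX ((A ∩ branchSet E b i σ) \ {x | (x, b ⟨i, σ⟩) ∈ E})) ⁻¹' Ioi 0 := by
      ext b
      simp only [hF, mem_setOf_eq, mem_inter_iff, mem_preimage, mem_Ioi]
    rw [hFeq]
    exact (hf1 measurableSet_Ioi).inter (hf2 measurableSet_Ioi)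
  have hdep : ∀ idx, ∀ b c : TreeIdx d → Y,
      (∀ j, ρ j < ρ idx → b j = c j) → b idx = c idx → (b ∈ F idx ↔ c ∈ F idx) := by
    intro idx b c hlow heq
    have hb : branchSet E b idx.1 idx.2 = branchSet E c idx.1 idx.2 :=
      hbranch_dep b c _ _ fun j hj => hlow j hj
    simp only [hF, mem_setOf_eq]
    rw [hb, heq]
  have hpos : ∀ idx, ∀ b : TreeIdx d → Y, (∀ j, ρ j < ρ idx → b ∈ F j) →
      0 < μY {y | Function.update b idx y ∈ F idx} := by
    intro idx b hlow
    have hupd : ∀ y, branchSet E (Function.update b idx y) idx.1 idx.2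
        = branchSet E b idx.1 idx.2 := by
      intro y
      refine hbranch_dep _ _ _ _ fun j hj => ?_
      refine Function.update_of_ne (fun hji => ?_) y b
      rw [hji] at hj; exact lt_irrefl _ hj
    have hset : {y | Function.update b idx y ∈ F idx}
        = {y | 0 < μX (A ∩ branchSet E b idx.1 idx.2 ∩ {x | (x, y) ∈ E}) ∧
            0 < μX ((A ∩ branchSet E b idx.1 idx.2) \ {x | (x, y) ∈ E})} := by
      ext y
      simp only [hF, mem_setOf_eq, hupd y, Function.update_self]
    have hABpos : 0 < μX (A ∩ branchSet E b idx.1 idx.2) := by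
      obtain ⟨i, σ⟩ := idx
      rcases Nat.eq_zero_or_pos i.val with h0 | hposi
      · have hbu : branchSet E b i σ = univ := by
          ext x
          simp only [branchSet, mem_setOf_eq, mem_univ, iff_true]
          intro j; exact absurd j.2 (by omega)
        rw [hbu, inter_univ]; exact hApos
      · obtain ⟨m, hm⟩ : ∃ m, i.val = m + 1 := ⟨i.val - 1, by omega⟩
        have hmd : m < d := by omega
        have hmi : m < i.val := by omega
        have hmem : b ∈ F ⟨⟨m, hmd⟩, fun k => σ ⟨k.1, lt_trans k.2 hmi⟩⟩ :=
          hlow ⟨⟨m, hmd⟩, fun k => σ ⟨k.1, lt_trans k.2 hmi⟩⟩ (by simp only [hρ]; omega)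
        simp only [hF, mem_setOf_eq] at hmem
        obtain ⟨hm1, hm2⟩ := hmem
        have hsplit : branchSet E b i σ
            = branchSet E b ⟨m, hmd⟩ (fun k => σ ⟨k.1, lt_trans k.2 hmi⟩)
              ∩ {x | ((x, b ⟨⟨m, hmd⟩, fun k => σ ⟨k.1, lt_trans k.2 hmi⟩⟩) ∈ E ↔ σ ⟨m, hmi⟩ = true)} := by
          ext x
          simp only [branchSet, mem_setOf_eq, mem_inter_iff]
          constructor
          · intro h
            exact ⟨fun j => h ⟨j.1, lt_trans j.2 hmi⟩, h ⟨m, hmi⟩⟩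
          · rintro ⟨h1, h2⟩ j
            rcases Nat.lt_succ_iff_lt_or_eq.1 (show j.1 < m + 1 by omega) with hlt | heq'
            · exact h1 ⟨j.1, hlt⟩
            · have hj : j = ⟨m, hmi⟩ := Fin.ext heq'
              subst hj
              exact h2
        by_cases hσm : σ ⟨m, hmi⟩ = true
        · have heqs : A ∩ branchSet E b i σ
              = A ∩ branchSet E b ⟨m, hmd⟩ (fun k => σ ⟨k.1, lt_trans k.2 hmi⟩)
                ∩ {x | (x, b ⟨⟨m, hmd⟩, fun k => σ ⟨k.1, lt_trans k.2 hmi⟩⟩) ∈ E} := by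
            rw [hsplit]
            ext x
            simp only [mem_inter_iff, mem_setOf_eq, hσm, iff_true]
            tauto
          rw [heqs]
          exact hm1
        · have hσm' : σ ⟨m, hmi⟩ = false := by
            revert hσm; cases σ ⟨m, hmi⟩ <;> simp
          have heqs : A ∩ branchSet E b i σ
              = (A ∩ branchSet E b ⟨m, hmd⟩ (fun k => σ ⟨k.1, lt_trans k.2 hmi⟩))
                \ {x | (x, b ⟨⟨m, hmd⟩, fun k => σ ⟨k.1, lt_trans k.2 hmi⟩⟩) ∈ E} := by
            rw [hsplit]
            ext x
            simp only [mem_inter_iff, mem_setOf_eq, mem_diff, hσm']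
            simp only [Bool.false_eq_true, iff_false]
            tauto
          rw [heqs]
          exact hm2
    rw [hset]
    have hPm : MeasurableSet (A ∩ branchSet E b idx.1 idx.2) := hA.inter (hbranch_meas b _ _)
    have hnp := hcon _ hPm inter_subset_left hABpos
    rw [PerfectFor] at hnp
    exact pos_iff_ne_zero.2 hnp
  have hpi := pi_iInter_pos μY ρ F hFm hdep hpos
  have hsub : (⋂ idx, F idx) ⊆ muTreeSet μX E d := by
    intro b hb i σ
    have hmem := mem_iInter.1 hb ⟨i, σ⟩
    simp only [hF, mem_setOf_eq] at hmem
    obtain ⟨h1, h2⟩ := hmem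
    constructor
    · exact lt_of_lt_of_le h1 (measure_mono fun x hx => ⟨hx.1.2, hx.2⟩)
    · exact lt_of_lt_of_le h2 (measure_mono fun x hx => ⟨hx.1.2, hx.2⟩)
  have hlast := lt_of_lt_of_le hpi (measure_mono hsub)
  rw [htree] at hlast
  exact lt_irrefl _ hlast

theorem perfectFor_of_null {X Y : Type*} [MeasurableSpace X] [MeasurableSpace Y]
    (μX : Measure X) (μY : Measure Y) (E : Set (X × Y)) (N : Set X) (hN : μX N = 0) :
    PerfectFor μX μY E N := by
  unfold PerfectFor
  have h : {y | 0 < μX (N ∩ {x | (x, y) ∈ E}) ∧ 0 < μX (N \ {x | (x, y) ∈ E})} = ∅ := by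
    ext y
    simp only [mem_setOf_eq, mem_empty_iff_false, iff_false, not_and]
    intro h1
    exact absurd (measure_mono_null inter_subset_left hN) h1.ne'
  rw [h]
  exact measure_empty

theorem perfectFor_union_null {X Y : Type*} [MeasurableSpace X] [MeasurableSpace Y]
    (μX : Measure X) (μY : Measure Y) (E : Set (X × Y)) {A N : Set X}
    (hA : PerfectFor μX μY E A) (hN : μX N = 0) : PerfectFor μX μY E (A ∪ N) := by
  unfold PerfectFor at *
  have h1 : ∀ S : Set X, μX ((A ∪ N) ∩ S) = μX (A ∩ S) := by
    intro S
    apply le_antisymm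
    · rw [union_inter_distrib_right]
      calc μX (A ∩ S ∪ N ∩ S) ≤ μX (A ∩ S) + μX (N ∩ S) := measure_union_le _ _
      _ = μX (A ∩ S) := by rw [measure_mono_null inter_subset_left hN, add_zero]
    · exact measure_mono (inter_subset_inter_left _ subset_union_left)
  have h2 : ∀ S : Set X, μX ((A ∪ N) \ S) = μX (A \ S) := by
    intro S
    apply le_antisymm
    · rw [union_diff_distrib]
      calc μX (A \ S ∪ N \ S) ≤ μX (A \ S) + μX (N \ S) := measure_union_le _ _
      _ = μX (A \ S) := by rw [measure_mono_null diff_subset hN, add_zero]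
    · exact measure_mono (diff_subset_diff_left subset_union_left)
  have hset : {y | 0 < μX ((A ∪ N) ∩ {x | (x, y) ∈ E}) ∧ 0 < μX ((A ∪ N) \ {x | (x, y) ∈ E})}
      = {y | 0 < μX (A ∩ {x | (x, y) ∈ E}) ∧ 0 < μX (A \ {x | (x, y) ∈ E})} := by
    ext y
    simp only [mem_setOf_eq, h1, h2]
  rw [hset]
  exact hA

/-- A μ-stable relation admits a countable partition of `X` into measurable perfect
sets. -/
theorem partition_into_perfect_sets
    {X Y : Type*} [MeasurableSpace X] [MeasurableSpace Y]
    (μX : Measure X) (μY : Measure Y)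
    [IsProbabilityMeasure μX] [IsProbabilityMeasure μY]
    (E : Set (X × Y)) (hE : MeasurableSet E)
    (hstab : ∃ d : ℕ, 1 ≤ d ∧
      (Measure.pi fun _ : TreeIdx d => μY) (muTreeSet μX E d) = 0) :
    ∃ A : ℕ → Set X,
      (∀ i, MeasurableSet (A i)) ∧
      Pairwise (Function.onFun Disjoint A) ∧
      (⋃ i, A i) = univ ∧
      ∀ i, PerfectFor μX μY E (A i) := by
  classical
  have hex : ∀ R : Set X, ∃ P, MeasurableSet P ∧ P ⊆ R ∧ PerfectFor μX μY E P ∧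
      (⨆ (Q : Set X) (_ : MeasurableSet Q ∧ Q ⊆ R ∧ PerfectFor μX μY E Q), μX Q) ≤ 2 * μX P := by
    intro R
    set s := ⨆ (Q : Set X) (_ : MeasurableSet Q ∧ Q ⊆ R ∧ PerfectFor μX μY E Q), μX Q with hs
    rcases eq_or_ne s 0 with h0 | hne
    · exact ⟨∅, MeasurableSet.empty, empty_subset R,
        perfectFor_of_null _ _ _ _ measure_empty, by rw [h0]; exact zero_le⟩
    · have hstop : s ≤ 1 := by
        rw [hs]
        exact iSup_le fun Q => iSup_le fun _ => prob_le_one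
      have hsnetop : s ≠ ∞ := fun h => by rw [h] at hstop; exact absurd hstop (by simp)
      have hlt : s / 2 < s := ENNReal.half_lt_self hne hsnetop
      rw [hs] at hlt
      obtain ⟨Q, hQ⟩ := lt_iSup_iff.1 hlt
      obtain ⟨hQcond, hQlt⟩ := lt_iSup_iff.1 hQ
      refine ⟨Q, hQcond.1, hQcond.2.1, hQcond.2.2, ?_⟩
      calc s = 2 * (s / 2) := (ENNReal.mul_div_cancel two_ne_zero ENNReal.ofNat_ne_top).symm
      _ ≤ 2 * μX Q := mul_le_mul_right hQlt.le 2
  choose pick hpickm hpicksub hpickperf hpicksup using hex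
  set rem : ℕ → Set X := fun n => Nat.rec univ (fun _ R => R \ pick R) n with hrem
  have hremS : ∀ n, rem (n+1) = rem n \ pick (rem n) := fun n => rfl
  have hremm : ∀ n, MeasurableSet (rem n) := by
    intro n
    induction n with
    | zero => exact MeasurableSet.univ
    | succ n ih => rw [hremS]; exact ih.diff (hpickm _)
  have hremmono : ∀ n, rem (n+1) ⊆ rem n := fun n => by rw [hremS]; exact diff_subset
  have hremle : ∀ m n, m ≤ n → rem n ⊆ rem m := by
    intro m n h
    induction h with
    | refl => exact subset_rfl
    | step _ ih => exact (hremmono _).trans ih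
  set A : ℕ → Set X := fun n => pick (rem n) with hA
  have hAsub : ∀ n, A n ⊆ rem n := fun n => hpicksub (rem n)
  have hAdisj : ∀ {m n : ℕ}, m < n → Disjoint (A m) (A n) := by
    intro m n h
    have h1 : A n ⊆ rem m \ A m :=
      (hpicksub (rem n)).trans (hremle (m+1) n h)
    exact disjoint_sdiff_self_right.mono_right h1
  have hAdisjP : Pairwise (Function.onFun Disjoint A) := by
    intro m n hmn
    rcases lt_or_gt_of_ne hmn with h | h
    · exact hAdisj h
    · exact (hAdisj h).symm
  set Rinf := ⋂ n, rem n with hRinf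
  have hRinfm : MeasurableSet Rinf := MeasurableSet.iInter hremm
  have hRinfnull : μX Rinf = 0 := by
    by_contra h
    have hpos : 0 < μX Rinf := pos_iff_ne_zero.2 h
    obtain ⟨P, hPm, hPsub, hPpos, hPperf⟩ :=
      exists_perfect_subset μX μY E hE hstab Rinf hRinfm hpos
    have hbound : ∀ n, μX P / 2 ≤ μX (A n) := by
      intro n
      have hc : MeasurableSet P ∧ P ⊆ rem n ∧ PerfectFor μX μY E P :=
        ⟨hPm, hPsub.trans (iInter_subset _ n), hPperf⟩
      have hsle : μX P ≤
          ⨆ (Q : Set X) (_ : MeasurableSet Q ∧ Q ⊆ rem n ∧ PerfectFor μX μY E Q), μX Q :=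
        le_iSup_of_le P (by rw [iSup_pos hc])
      have h2 := hsle.trans (hpicksup (rem n))
      rw [ENNReal.div_le_iff_le_mul (Or.inl two_ne_zero) (Or.inl ENNReal.ofNat_ne_top)]
      calc μX P ≤ 2 * μX (A n) := h2
      _ = μX (A n) * 2 := mul_comm _ _
    have htop : (∑' _ : ℕ, μX P / 2) = ∞ :=
      ENNReal.tsum_const_eq_top_of_ne_zero (by
        simp only [ne_eq, ENNReal.div_eq_zero_iff, not_or]
        exact ⟨hPpos.ne', ENNReal.ofNat_ne_top⟩)
    have hsum : (∑' n, μX (A n)) ≤ 1 := by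
      rw [← measure_iUnion hAdisjP fun n => hpickm _]
      exact prob_le_one
    have hcontr : (∞ : ℝ≥0∞) ≤ 1 := by
      rw [← htop]
      exact (ENNReal.tsum_le_tsum hbound).trans hsum
    simp at hcontr
  have hcover : ∀ x, (∀ n, x ∉ A n) → ∀ n, x ∈ rem n := by
    intro x hx n
    induction n with
    | zero => exact mem_univ x
    | succ n ih => rw [hremS]; exact ⟨ih, hx n⟩
  refine ⟨fun n => match n with | 0 => A 0 ∪ Rinf | (n+1) => A (n+1), ?_, ?_, ?_, ?_⟩
  · intro n
    match n with
    | 0 => exact (hpickm _).union hRinfm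
    | (n+1) => exact hpickm _
  · intro m n hmn
    have hRdisj : ∀ k : ℕ, Disjoint Rinf (A (k+1)) := by
      intro k
      have h1 : Rinf ⊆ rem (k+1) \ A (k+1) := iInter_subset _ (k+2)
      exact (disjoint_sdiff_self_left.mono_left h1)
    match m, n with
    | 0, 0 => exact absurd rfl hmn
    | 0, (n+1) =>
      exact Set.disjoint_union_left.2 ⟨hAdisj (Nat.succ_pos n), hRdisj n⟩
    | (m+1), 0 =>
      exact (Set.disjoint_union_left.2 ⟨hAdisj (Nat.succ_pos m), hRdisj m⟩).symm
    | (m+1), (n+1) =>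
      exact hAdisjP (by omega : m + 1 ≠ n + 1)
  · rw [eq_univ_iff_forall]
    intro x
    rw [mem_iUnion]
    by_cases hx : ∃ n, x ∈ A n
    · obtain ⟨n, hn⟩ := hx
      match n with
      | 0 => exact ⟨0, Or.inl hn⟩
      | (n+1) => exact ⟨n+1, hn⟩
    · push_neg at hx
      exact ⟨0, Or.inr (by rw [hRinf, mem_iInter]; exact fun n => hcover x hx n)⟩
  · intro n
    match n with
    | 0 => exact perfectFor_union_null μX μY E (hpickperf _) hRinfnull
    | (n+1) => exact hpickperf _
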